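/- Let (W_1, W_2) on K be a minimal regular unitary dilation of a commuting pair of contractions (T_1, T_2) on H ⊆ K, and let S_1,…,S_d be isometries on H such that (T_1, S_1,…,S_d) and (T_2, S_1,…,S_d) are doubly commuting tuples. Then for each i and each finite collection h_1,…,h_r ∈ H, k^1,…,k^r ∈ ℤ², one has ‖∑_l W^{k^l} S_i h_l‖ = ‖∑_l W^{k^l} h_l‖, and consequently there is a well-defined isometry U_i on K with U_i(W^k h) = W^k S_i h for all h ∈ H and k ∈ ℤ². -/

import Mathlib

open ContinuousLinearMap

/-- For commuting unitaries `W₁, W₂`, the operator `W^k = W₁^{k₁} W₂^{k₂}` for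
`k ∈ ℤ²`, written via positive and negative parts. -/
noncomputable def Wpow {K : Type*} [NormedAddCommGroup K] [InnerProductSpace ℂ K]
    [CompleteSpace K] (W₁ W₂ : K →L[ℂ] K) (a b : ℤ) : K →L[ℂ] K :=
  W₁ ^ a.toNat * (adjoint W₁) ^ (-a).toNat *
    (W₂ ^ b.toNat * (adjoint W₂) ^ (-b).toNat)

section Aux

private lemma aux_commute_of_inv {M : Type*} [Monoid M] {a u v : M}
    (h1 : u * v = 1) (h2 : v * u = 1) (h : Commute a u) : Commute a v := by
  show a * v = v * a
  calc a * v = v * u * (a * v) := by rw [h2, one_mul]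
    _ = v * (u * a) * v := by simp only [mul_assoc]
    _ = v * (a * u) * v := by rw [h.eq]
    _ = v * a * (u * v) := by simp only [mul_assoc]
    _ = v * a := by rw [h1, mul_one]

private lemma aux_unit_zpow_val {M : Type*} [Monoid M] (u : Mˣ) (a : ℤ) :
    ((u ^ a : Mˣ) : M) = (u : M) ^ a.toNat * ((u⁻¹ : Mˣ) : M) ^ (-a).toNat := by
  cases a with
  | ofNat n =>
      have h2 : (-(Int.ofNat n)).toNat = 0 := Int.toNat_of_nonpos (by simp)
      have h1 : (Int.ofNat n).toNat = n := rfl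
      rw [h1, h2, pow_zero, mul_one]
      rw [show (Int.ofNat n) = (n : ℤ) from rfl, zpow_natCast, Units.val_pow_eq_pow_val]
  | negSucc n =>
      have h1 : (Int.negSucc n).toNat = 0 := rfl
      have h2 : (-(Int.negSucc n)).toNat = n + 1 := by rw [Int.neg_negSucc]; rfl
      rw [h1, h2, pow_zero, one_mul, zpow_negSucc, ← inv_pow, Units.val_pow_eq_pow_val]

private lemma aux_star_unit_zpow {M : Type*} [Monoid M] [StarMul M] (u : Mˣ)
    (hu : star (u : M) = ((u⁻¹ : Mˣ) : M)) (a : ℤ) :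
    star ((u ^ a : Mˣ) : M) = ((u⁻¹ ^ a : Mˣ) : M) := by
  have hu' : star ((u⁻¹ : Mˣ) : M) = (u : M) := by rw [← hu, star_star]
  cases a with
  | ofNat n =>
      rw [show (Int.ofNat n) = (n : ℤ) from rfl, zpow_natCast, zpow_natCast,
        Units.val_pow_eq_pow_val, Units.val_pow_eq_pow_val, star_pow, hu]
  | negSucc n =>
      rw [zpow_negSucc, zpow_negSucc, ← inv_pow, ← inv_pow, inv_inv,
        Units.val_pow_eq_pow_val, Units.val_pow_eq_pow_val, star_pow, hu']

private lemma aux_grp {G : Type*} [Group G] {x y : G} (h : Commute x y) (α β γ δ : ℤ) :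
    x ^ α * y ^ β * (x ^ γ * y ^ δ) = x ^ (α + γ) * y ^ (β + δ) := by
  have hc : Commute (y ^ β) (x ^ γ) := h.symm.zpow_zpow β γ
  calc x ^ α * y ^ β * (x ^ γ * y ^ δ) = x ^ α * (y ^ β * x ^ γ) * y ^ δ := by
        simp only [mul_assoc]
    _ = x ^ α * (x ^ γ * y ^ β) * y ^ δ := by rw [hc.eq]
    _ = x ^ α * x ^ γ * (y ^ β * y ^ δ) := by simp only [mul_assoc]
    _ = x ^ (α + γ) * y ^ (β + δ) := by rw [← zpow_add, ← zpow_add]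

/-- package a unitary as a unit of the algebra of operators. -/
private noncomputable def mkU {K : Type*} [NormedAddCommGroup K] [InnerProductSpace ℂ K]
    [CompleteSpace K] (W : K →L[ℂ] K) (h1 : W * adjoint W = 1) (h2 : adjoint W * W = 1) :
    (K →L[ℂ] K)ˣ := ⟨W, adjoint W, h1, h2⟩

@[simp] private lemma mkU_val {K : Type*} [NormedAddCommGroup K] [InnerProductSpace ℂ K]
    [CompleteSpace K] (W : K →L[ℂ] K) (h1 : W * adjoint W = 1) (h2 : adjoint W * W = 1) :
    ((mkU W h1 h2 : (K →L[ℂ] K)ˣ) : K →L[ℂ] K) = W := rfl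

@[simp] private lemma mkU_inv_val {K : Type*} [NormedAddCommGroup K] [InnerProductSpace ℂ K]
    [CompleteSpace K] (W : K →L[ℂ] K) (h1 : W * adjoint W = 1) (h2 : adjoint W * W = 1) :
    (((mkU W h1 h2)⁻¹ : (K →L[ℂ] K)ˣ) : K →L[ℂ] K) = adjoint W := rfl

end Aux

set_option maxHeartbeats 1000000 in
/-- Let `(W₁, W₂)` on `K` be a minimal regular unitary dilation of the commuting pair of
contractions `(T₁, T₂)` on `H` (embedded via the isometry `ι`), and let `S_1,…,S_d` be
isometries on `H` such that `(T₁, S_1,…,S_d)` and `(T₂, S_1,…,S_d)` are doubly commuting.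
Then `‖∑_l W^{k^l} S_i h_l‖ = ‖∑_l W^{k^l} h_l‖` for all finite collections, and
consequently there are well-defined isometries `U_i` on `K` with
`U_i (W^k h) = W^k (S_i h)` for all `h ∈ H`, `k ∈ ℤ²`. -/
theorem isometries_on_minimal_dilation_space {H K : Type*}
    [NormedAddCommGroup H] [InnerProductSpace ℂ H] [CompleteSpace H]
    [NormedAddCommGroup K] [InnerProductSpace ℂ K] [CompleteSpace K]
    (ι : H →L[ℂ] K) (hι : adjoint ι ∘L ι = 1)
    (T₁ T₂ : H →L[ℂ] H) (hT₁ : ‖T₁‖ ≤ 1) (hT₂ : ‖T₂‖ ≤ 1) (hT : Commute T₁ T₂)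
    (W₁ W₂ : K →L[ℂ] K)
    (hW₁ : adjoint W₁ ∘L W₁ = 1 ∧ W₁ ∘L adjoint W₁ = 1)
    (hW₂ : adjoint W₂ ∘L W₂ = 1 ∧ W₂ ∘L adjoint W₂ = 1)
    (hW : Commute W₁ W₂)
    (hreg : ∀ a b : ℤ,
      adjoint ι ∘L ((adjoint W₁) ^ (-a).toNat * (adjoint W₂) ^ (-b).toNat *
          (W₁ ^ a.toNat * W₂ ^ b.toNat)) ∘L ι
        = (adjoint T₁) ^ (-a).toNat * (adjoint T₂) ^ (-b).toNat *
            (T₁ ^ a.toNat * T₂ ^ b.toNat))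
    (hmin : (Submodule.span ℂ
        {x : K | ∃ (a b : ℤ) (h : H), x = Wpow W₁ W₂ a b (ι h)}).topologicalClosure = ⊤)
    {d : ℕ} (S : Fin d → (H →L[ℂ] H))
    (hS : ∀ i, adjoint (S i) ∘L S i = 1)
    (hSS : ∀ i j, i ≠ j →
      S i * S j = S j * S i ∧ S i * adjoint (S j) = adjoint (S j) * S i)
    (hST₁ : ∀ i, T₁ * S i = S i * T₁ ∧ T₁ * adjoint (S i) = adjoint (S i) * T₁)
    (hST₂ : ∀ i, T₂ * S i = S i * T₂ ∧ T₂ * adjoint (S i) = adjoint (S i) * T₂) :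
    (∀ (i : Fin d) (r : ℕ) (h : Fin r → H) (κ : Fin r → ℤ × ℤ),
      ‖∑ l, Wpow W₁ W₂ (κ l).1 (κ l).2 (ι (S i (h l)))‖
        = ‖∑ l, Wpow W₁ W₂ (κ l).1 (κ l).2 (ι (h l))‖) ∧
    ∃ U : Fin d → (K →L[ℂ] K), ∀ i,
      (adjoint (U i) ∘L U i = 1) ∧
      ∀ (a b : ℤ) (h : H), U i (Wpow W₁ W₂ a b (ι h)) = Wpow W₁ W₂ a b (ι (S i h)) := by
  classical
  have hW₁m : W₁ * adjoint W₁ = 1 := hW₁.2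
  have hW₁m' : adjoint W₁ * W₁ = 1 := hW₁.1
  have hW₂m : W₂ * adjoint W₂ = 1 := hW₂.2
  have hW₂m' : adjoint W₂ * W₂ = 1 := hW₂.1
  set X : (K →L[ℂ] K)ˣ := mkU W₁ hW₁m hW₁m' with hXdef
  set Y : (K →L[ℂ] K)ˣ := mkU W₂ hW₂m hW₂m' with hYdef
  have hXY : Commute X Y := by
    apply Units.ext
    simpa [Units.val_mul, hXdef, hYdef] using hW.eq
  have hWpow : ∀ a b : ℤ, Wpow W₁ W₂ a b
      = ((X ^ a * Y ^ b : (K →L[ℂ] K)ˣ) : K →L[ℂ] K) := by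
    intro a b
    rw [Wpow, Units.val_mul, aux_unit_zpow_val, aux_unit_zpow_val, mkU_val, mkU_val,
      mkU_inv_val, mkU_inv_val]
  have hstarX : star ((X : (K →L[ℂ] K)ˣ) : K →L[ℂ] K) = ((X⁻¹ : (K →L[ℂ] K)ˣ) : K →L[ℂ] K) := by
    rw [mkU_val, mkU_inv_val, star_eq_adjoint]
  have hstarY : star ((Y : (K →L[ℂ] K)ˣ) : K →L[ℂ] K) = ((Y⁻¹ : (K →L[ℂ] K)ˣ) : K →L[ℂ] K) := by
    rw [mkU_val, mkU_inv_val, star_eq_adjoint]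
  -- adjoint of Wpow
  have hadj : ∀ a b : ℤ, adjoint (Wpow W₁ W₂ a b)
      = ((X ^ (-a) * Y ^ (-b) : (K →L[ℂ] K)ˣ) : K →L[ℂ] K) := by
    intro a b
    rw [← star_eq_adjoint, hWpow, Units.val_mul, star_mul,
      aux_star_unit_zpow X hstarX, aux_star_unit_zpow Y hstarY, ← Units.val_mul]
    congr 1
    have h1 : (Y⁻¹ ^ b : (K →L[ℂ] K)ˣ) = Y ^ (-b) := by rw [inv_zpow']
    have h2 : (X⁻¹ ^ a : (K →L[ℂ] K)ˣ) = X ^ (-a) := by rw [inv_zpow']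
    rw [h1, h2, (hXY.symm.zpow_zpow (-b) (-a)).eq]
  -- product formula
  have hmulWW : ∀ a b c d : ℤ,
      ((X ^ a * Y ^ b : (K →L[ℂ] K)ˣ) : K →L[ℂ] K)
        * ((X ^ c * Y ^ d : (K →L[ℂ] K)ˣ) : K →L[ℂ] K)
      = ((X ^ (a + c) * Y ^ (b + d) : (K →L[ℂ] K)ˣ) : K →L[ℂ] K) := by
    intro a b c d
    rw [← Units.val_mul]
    congr 1
    exact aux_grp hXY a b c d
  -- inner product shift
  have hinner1 : ∀ (a b c d : ℤ) (x y : K),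
      (inner ℂ (Wpow W₁ W₂ a b x) (Wpow W₁ W₂ c d y) : ℂ)
        = inner ℂ x (Wpow W₁ W₂ (c - a) (d - b) y) := by
    intro a b c d x y
    rw [← adjoint_inner_right]
    congr 1
    have : adjoint (Wpow W₁ W₂ a b) (Wpow W₁ W₂ c d y)
        = (adjoint (Wpow W₁ W₂ a b) * Wpow W₁ W₂ c d) y := rfl
    rw [this, hadj, hWpow c d, hmulWW, neg_add_eq_sub, neg_add_eq_sub, ← hWpow]
  -- regularity in inner product form
  have hXeq : ∀ a b : ℤ,
      (adjoint W₁) ^ (-a).toNat * (adjoint W₂) ^ (-b).toNat *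
          (W₁ ^ a.toNat * W₂ ^ b.toNat) = Wpow W₁ W₂ a b := by
    intro a b
    rw [hWpow]
    rw [show (adjoint W₁ : K →L[ℂ] K) = ((X⁻¹ : (K →L[ℂ] K)ˣ) : K →L[ℂ] K) from rfl,
      show (adjoint W₂ : K →L[ℂ] K) = ((Y⁻¹ : (K →L[ℂ] K)ˣ) : K →L[ℂ] K) from rfl,
      show (W₁ : K →L[ℂ] K) = ((X : (K →L[ℂ] K)ˣ) : K →L[ℂ] K) from rfl,
      show (W₂ : K →L[ℂ] K) = ((Y : (K →L[ℂ] K)ˣ) : K →L[ℂ] K) from rfl]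
    rw [← Units.val_pow_eq_pow_val, ← Units.val_pow_eq_pow_val, ← Units.val_pow_eq_pow_val,
      ← Units.val_pow_eq_pow_val, ← Units.val_mul, ← Units.val_mul, ← Units.val_mul]
    congr 1
    rw [← zpow_natCast X⁻¹, ← zpow_natCast Y⁻¹, ← zpow_natCast X, ← zpow_natCast Y,
      inv_zpow', inv_zpow', aux_grp hXY]
    congr 1
    · congr 1; omega
    · congr 1; omega
  have hreg' : ∀ (a b : ℤ) (g h : H),
      (inner ℂ (ι g) (Wpow W₁ W₂ a b (ι h)) : ℂ)
        = inner ℂ g (((adjoint T₁) ^ (-a).toNat * (adjoint T₂) ^ (-b).toNat *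
            (T₁ ^ a.toNat * T₂ ^ b.toNat)) h) := by
    intro a b g h
    rw [← hXeq a b, ← hreg a b]
    have : ((adjoint ι ∘L ((adjoint W₁) ^ (-a).toNat * (adjoint W₂) ^ (-b).toNat *
        (W₁ ^ a.toNat * W₂ ^ b.toNat)) ∘L ι) h)
        = adjoint ι (((adjoint W₁) ^ (-a).toNat * (adjoint W₂) ^ (-b).toNat *
            (W₁ ^ a.toNat * W₂ ^ b.toNat)) (ι h)) := rfl
    rw [this, adjoint_inner_right]
  -- the S-invariance of the inner products
  have hScomm : ∀ i : Fin d,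
      ∀ a b : ℤ, ((adjoint T₁) ^ (-a).toNat * (adjoint T₂) ^ (-b).toNat *
          (T₁ ^ a.toNat * T₂ ^ b.toNat)) * S i
        = S i * ((adjoint T₁) ^ (-a).toNat * (adjoint T₂) ^ (-b).toNat *
            (T₁ ^ a.toNat * T₂ ^ b.toNat)) := by
    intro i a b
    have c1 : Commute T₁ (S i) := (hST₁ i).1
    have c2 : Commute T₂ (S i) := (hST₂ i).1
    have c1' : Commute (adjoint T₁) (S i) := by
      have h2 := congrArg star (hST₁ i).2
      simp only [star_mul, star_eq_adjoint, adjoint_adjoint] at h2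
      exact h2.symm
    have c2' : Commute (adjoint T₂) (S i) := by
      have h2 := congrArg star (hST₂ i).2
      simp only [star_mul, star_eq_adjoint, adjoint_adjoint] at h2
      exact h2.symm
    exact (((c1'.pow_left _).mul_left (c2'.pow_left _)).mul_left
      ((c1.pow_left _).mul_left (c2.pow_left _))).eq
  have hregS : ∀ (i : Fin d) (a b : ℤ) (g h : H),
      (inner ℂ (ι (S i g)) (Wpow W₁ W₂ a b (ι (S i h))) : ℂ)
        = inner ℂ (ι g) (Wpow W₁ W₂ a b (ι h)) := by
    intro i a b g h
    rw [hreg', hreg']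
    set M : H →L[ℂ] H := (adjoint T₁) ^ (-a).toNat * (adjoint T₂) ^ (-b).toNat *
        (T₁ ^ a.toNat * T₂ ^ b.toNat) with hM
    have step : (inner ℂ (S i g) (M (S i h)) : ℂ) = inner ℂ g ((adjoint (S i) * (M * S i)) h) := by
      rw [← adjoint_inner_right]
      rfl
    rw [step, hScomm i a b, ← mul_assoc]
    have hS1 : adjoint (S i) * S i = 1 := hS i
    rw [hS1, one_mul]
  -- core norm identity for arbitrary finite families
  have core : ∀ (i : Fin d) (A : Type) (t : Finset A) (κ : A → ℤ × ℤ) (z : A → H),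
      ‖∑ l ∈ t, Wpow W₁ W₂ (κ l).1 (κ l).2 (ι (S i (z l)))‖
        = ‖∑ l ∈ t, Wpow W₁ W₂ (κ l).1 (κ l).2 (ι (z l))‖ := by
    intro i A t κ z
    have hin : (inner ℂ (∑ l ∈ t, Wpow W₁ W₂ (κ l).1 (κ l).2 (ι (S i (z l))))
          (∑ l ∈ t, Wpow W₁ W₂ (κ l).1 (κ l).2 (ι (S i (z l)))) : ℂ)
        = inner ℂ (∑ l ∈ t, Wpow W₁ W₂ (κ l).1 (κ l).2 (ι (z l)))
            (∑ l ∈ t, Wpow W₁ W₂ (κ l).1 (κ l).2 (ι (z l))) := by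
      rw [sum_inner, sum_inner]
      refine Finset.sum_congr rfl fun l _ => ?_
      rw [inner_sum, inner_sum]
      refine Finset.sum_congr rfl fun m _ => ?_
      rw [hinner1, hinner1, hregS]
    rw [@norm_eq_sqrt_re_inner ℂ, @norm_eq_sqrt_re_inner ℂ, hin]
  refine ⟨fun i r h κ => core i (Fin r) Finset.univ κ h, ?_⟩
  -- construction of the isometries U i
  have main : ∀ i : Fin d, ∃ Ui : K →L[ℂ] K,
      (adjoint Ui ∘L Ui = 1) ∧
      ∀ (a b : ℤ) (h : H), Ui (Wpow W₁ W₂ a b (ι h)) = Wpow W₁ W₂ a b (ι (S i h)) := by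
    intro i
    set Φ : ((ℤ × ℤ) →₀ H) →ₗ[ℂ] K :=
      Finsupp.lsum ℂ (fun k => (Wpow W₁ W₂ k.1 k.2 ∘L ι).toLinearMap) with hΦdef
    set Ψ : ((ℤ × ℤ) →₀ H) →ₗ[ℂ] K :=
      Finsupp.lsum ℂ (fun k => (Wpow W₁ W₂ k.1 k.2 ∘L ι ∘L S i).toLinearMap) with hΨdef
    have hΦ : ∀ g : (ℤ × ℤ) →₀ H,
        Φ g = ∑ k ∈ g.support, Wpow W₁ W₂ k.1 k.2 (ι (g k)) := fun g => rfl
    have hΨ : ∀ g : (ℤ × ℤ) →₀ H,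
        Ψ g = ∑ k ∈ g.support, Wpow W₁ W₂ k.1 k.2 (ι (S i (g k))) := fun g => rfl
    have hΦsingle : ∀ (a b : ℤ) (h : H),
        Φ (Finsupp.single (a, b) h) = Wpow W₁ W₂ a b (ι h) := by
      intro a b h
      rw [hΦdef, Finsupp.lsum_single]
      rfl
    have hΨsingle : ∀ (a b : ℤ) (h : H),
        Ψ (Finsupp.single (a, b) h) = Wpow W₁ W₂ a b (ι (S i h)) := by
      intro a b h
      rw [hΨdef, Finsupp.lsum_single]
      rfl
    have hnorm : ∀ g, ‖Ψ g‖ = ‖Φ g‖ := by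
      intro g
      rw [hΦ, hΨ]
      exact core i (ℤ × ℤ) g.support id (fun k => g k)
    have hker : LinearMap.ker Φ ≤ LinearMap.ker Ψ := by
      intro g hg
      rw [LinearMap.mem_ker] at hg ⊢
      have := hnorm g
      rw [hg, norm_zero] at this
      exact norm_eq_zero.mp this
    set u₀ : (((ℤ × ℤ) →₀ H) ⧸ LinearMap.ker Φ) →ₗ[ℂ] K :=
      (LinearMap.ker Φ).liftQ Ψ hker with hu₀def
    set u₁ : ↥(LinearMap.range Φ) →ₗ[ℂ] K :=
      u₀ ∘ₗ (Φ.quotKerEquivRange.symm.toLinearMap) with hu₁def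
    have hu₁ : ∀ (g : (ℤ × ℤ) →₀ H) (hg : Φ g ∈ LinearMap.range Φ),
        u₁ ⟨Φ g, hg⟩ = Ψ g := by
      intro g hg
      show u₀ (Φ.quotKerEquivRange.symm ⟨Φ g, hg⟩) = Ψ g
      rw [LinearMap.quotKerEquivRange_symm_apply_image]
      rw [hu₀def]
      exact Submodule.liftQ_apply _ _ _
    have hu₁n : ∀ x : ↥(LinearMap.range Φ), ‖u₁ x‖ = ‖(x : K)‖ := by
      rintro ⟨x, hx⟩
      obtain ⟨g, rfl⟩ := hx
      refine (congrArg norm (hu₁ g (LinearMap.mem_range_self _ _))).trans ?_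
      exact hnorm g
    set p := Submodule.span ℂ {x : K | ∃ (a b : ℤ) (h : H), x = Wpow W₁ W₂ a b (ι h)}
      with hpdef
    have hrange : LinearMap.range Φ = p := by
      apply le_antisymm
      · rintro x ⟨g, rfl⟩
        rw [hΦ]
        exact Submodule.sum_mem _ fun k _ => Submodule.subset_span ⟨k.1, k.2, g k, rfl⟩
      · rw [Submodule.span_le]
        rintro x ⟨a, b, h, rfl⟩
        exact ⟨Finsupp.single (a, b) h, hΦsingle a b h⟩
    set eq1 : ↥p ≃ₗ[ℂ] ↥(LinearMap.range Φ) := LinearEquiv.ofEq _ _ hrange.symm with heq1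
    set u : ↥p →ₗ[ℂ] K := u₁ ∘ₗ eq1.toLinearMap with hudef
    have hun : ∀ x : ↥p, ‖u x‖ = ‖(x : K)‖ := by
      intro x
      have : ((eq1 x : ↥(LinearMap.range Φ)) : K) = (x : K) := rfl
      calc ‖u x‖ = ‖u₁ (eq1 x)‖ := rfl
        _ = ‖((eq1 x : ↥(LinearMap.range Φ)) : K)‖ := hu₁n _
        _ = ‖(x : K)‖ := by rw [this]
    set uc : ↥p →L[ℂ] K := u.mkContinuous 1 (fun x => by rw [hun]; simp) with hucdef
    have hdense : DenseRange (p.subtypeL : ↥p →L[ℂ] K) := by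
      have hd : Dense (p : Set K) := Submodule.dense_iff_topologicalClosure_eq_top.mpr hmin
      have : Set.range (p.subtypeL : ↥p →L[ℂ] K) = (p : Set K) := Subtype.range_coe
      unfold DenseRange
      rw [this]
      exact hd
    have hui : IsUniformInducing (p.subtypeL : ↥p →L[ℂ] K) :=
      isometry_subtype_coe.isUniformInducing
    set Ui : K →L[ℂ] K := uc.extend p.subtypeL with hUidef
    have hUie : ∀ x : ↥p, Ui (x : K) = uc x := fun x =>
      ContinuousLinearMap.extend_eq uc hdense hui x
    have hgen : ∀ (a b : ℤ) (h : H),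
        Ui (Wpow W₁ W₂ a b (ι h)) = Wpow W₁ W₂ a b (ι (S i h)) := by
      intro a b h
      have hx : Wpow W₁ W₂ a b (ι h) ∈ p := Submodule.subset_span ⟨a, b, h, rfl⟩
      have e2 : Ui (Wpow W₁ W₂ a b (ι h)) = uc ⟨_, hx⟩ := hUie ⟨_, hx⟩
      rw [e2]
      have e3 : uc ⟨_, hx⟩ = u₁ (eq1 ⟨_, hx⟩) := rfl
      rw [e3]
      have hx' : Wpow W₁ W₂ a b (ι h) ∈ LinearMap.range Φ :=
        ⟨Finsupp.single (a, b) h, hΦsingle a b h⟩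
      have e4 : eq1 ⟨_, hx⟩ = ⟨Φ (Finsupp.single (a, b) h), LinearMap.mem_range_self _ _⟩ := by
        apply Subtype.ext
        show Wpow W₁ W₂ a b (ι h) = Φ (Finsupp.single (a, b) h)
        rw [hΦsingle]
      rw [e4, hu₁, hΨsingle]
    have hUin : ∀ y : K, ‖Ui y‖ = ‖y‖ := by
      have hcl : IsClosed {y : K | ‖Ui y‖ = ‖y‖} :=
        isClosed_eq Ui.continuous.norm continuous_norm
      intro y
      refine hdense.induction_on y hcl ?_
      intro x
      show ‖Ui (x : K)‖ = ‖(x : K)‖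
      rw [hUie x]
      calc ‖uc x‖ = ‖u x‖ := rfl
        _ = ‖(x : K)‖ := hun x
    have hadjU : adjoint Ui ∘L Ui = 1 := by
      have li : K →ₗᵢ[ℂ] K := ⟨Ui.toLinearMap, hUin⟩
      ext y
      refine ext_inner_left ℂ fun v => ?_
      have e5 : (adjoint Ui ∘L Ui) y = adjoint Ui (Ui y) := rfl
      rw [e5, adjoint_inner_right]
      have e6 : ((1 : K →L[ℂ] K) y) = y := rfl
      rw [e6]
      exact (⟨Ui.toLinearMap, hUin⟩ : K →ₗᵢ[ℂ] K).inner_map_map v y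
    exact ⟨Ui, hadjU, hgen⟩
  exact ⟨fun i => (main i).choose, fun i => (main i).choose_spec⟩
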